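/- Let (X, 𝔪) be a measure space, (φ_j)_{j∈ℕ} a Hilbert basis (orthonormal basis) of the complex Hilbert space L²(X, 𝔪), ψ ∈ L²(X, 𝔪), A ⊆ X a measurable set, and J ⊆ ℕ a finite set. Then ‖1_A·ψ‖ ≤ ‖ψ‖·√(Σ_{j∈J} ‖1_A·φ_j‖²) + √(Σ_{j∉J} |⟨ψ, φ_j⟩|²), where ‖·‖ and ⟨·,·⟩ denote the L²(X, 𝔪) norm and inner product, and 1_A·f denotes the pointwise product of f with the indicator function of A (the series Σ_{j∉J} |⟨ψ, φ_j⟩|² converges by Bessel's inequality). -/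

import Mathlib

open MeasureTheory

noncomputable def Nres {X : Type*} [MeasurableSpace X] (m : Measure X) (A : Set X)
    (f : Lp ℂ 2 m) : ℝ := (eLpNorm (f : X → ℂ) 2 (m.restrict A)).toReal

section aux
variable {X : Type*} [MeasurableSpace X] {m : Measure X} {A : Set X}

lemma Nres_memℒp (f : Lp ℂ 2 m) : MemLp (f : X → ℂ) 2 (m.restrict A) :=
  (Lp.memLp f).mono_measure Measure.restrict_le_self

lemma Nres_fin (f : Lp ℂ 2 m) : eLpNorm (f : X → ℂ) 2 (m.restrict A) ≠ ⊤ :=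
  (Nres_memℒp f).eLpNorm_ne_top

lemma Nres_eq_sqrt (f : Lp ℂ 2 m) :
    Real.sqrt (∫ x in A, ‖f x‖ ^ 2 ∂m) = Nres m A f := by
  rw [Nres, (Nres_memℒp f).eLpNorm_eq_integral_rpow_norm two_ne_zero ENNReal.ofNat_ne_top]
  rw [ENNReal.toReal_ofReal (Real.rpow_nonneg (integral_nonneg (fun x => by positivity)) _)]
  rw [Real.sqrt_eq_rpow]
  norm_num

lemma Nres_nonneg (f : Lp ℂ 2 m) : 0 ≤ Nres m A f := ENNReal.toReal_nonneg

lemma Nres_le_norm (f : Lp ℂ 2 m) : Nres m A f ≤ ‖f‖ := by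
  rw [Nres, Lp.norm_def]
  exact ENNReal.toReal_mono (Lp.eLpNorm_ne_top f)
    (eLpNorm_mono_measure _ Measure.restrict_le_self)

lemma Nres_zero : Nres m A (0 : Lp ℂ 2 m) = 0 := by
  rw [Nres]
  rw [eLpNorm_congr_ae ((Lp.coeFn_zero ℂ 2 m).filter_mono (ae_mono Measure.restrict_le_self))]
  simp

lemma Nres_add (f g : Lp ℂ 2 m) : Nres m A (f + g) ≤ Nres m A f + Nres m A g := by
  have h1 : eLpNorm ((f + g : Lp ℂ 2 m) : X → ℂ) 2 (m.restrict A)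
      = eLpNorm ((f : X → ℂ) + (g : X → ℂ)) 2 (m.restrict A) :=
    eLpNorm_congr_ae ((Lp.coeFn_add f g).filter_mono (ae_mono Measure.restrict_le_self))
  have h2 : eLpNorm ((f : X → ℂ) + (g : X → ℂ)) 2 (m.restrict A)
      ≤ eLpNorm (f : X → ℂ) 2 (m.restrict A) + eLpNorm (g : X → ℂ) 2 (m.restrict A) :=
    eLpNorm_add_le (Nres_memℒp f).1 (Nres_memℒp g).1 one_le_two
  calc Nres m A (f + g) = (eLpNorm ((f : X → ℂ) + (g : X → ℂ)) 2 (m.restrict A)).toReal := by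
        rw [Nres, h1]
    _ ≤ (eLpNorm (f : X → ℂ) 2 (m.restrict A) + eLpNorm (g : X → ℂ) 2 (m.restrict A)).toReal :=
        ENNReal.toReal_mono (ENNReal.add_ne_top.2 ⟨Nres_fin f, Nres_fin g⟩) h2
    _ = Nres m A f + Nres m A g := ENNReal.toReal_add (Nres_fin f) (Nres_fin g)

lemma Nres_smul (c : ℂ) (f : Lp ℂ 2 m) : Nres m A (c • f) = ‖c‖ * Nres m A f := by
  rw [Nres, eLpNorm_congr_ae ((Lp.coeFn_smul c f).filter_mono (ae_mono Measure.restrict_le_self)),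
    eLpNorm_const_smul, ENNReal.toReal_mul, Nres]
  simp

lemma Nres_sum (s : Finset ℕ) (v : ℕ → Lp ℂ 2 m) :
    Nres m A (∑ j ∈ s, v j) ≤ ∑ j ∈ s, Nres m A (v j) :=
  Finset.le_sum_of_subadditive (Nres m A) Nres_zero.le Nres_add s v

end aux

set_option maxHeartbeats 1000000 in
theorem stmt_9 {X : Type*} [MeasurableSpace X] (m : Measure X)
    (φ : HilbertBasis ℕ ℂ (Lp ℂ 2 m)) (ψ : Lp ℂ 2 m)
    (A : Set X) (hA : MeasurableSet A) (J : Finset ℕ) :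
    Real.sqrt (∫ x in A, ‖ψ x‖ ^ 2 ∂m)
      ≤ ‖ψ‖ * Real.sqrt (∑ j ∈ J, ∫ x in A, ‖(φ j) x‖ ^ 2 ∂m)
        + Real.sqrt (∑' j : {j : ℕ // j ∉ J}, ‖(inner ℂ ψ (φ (j : ℕ)) : ℂ)‖ ^ 2) := by
  classical
  have hpow : ∀ x : ℝ, x ^ (2:ℝ) = x ^ 2 := fun x => by
    rw [show (2:ℝ) = ((2:ℕ):ℝ) by norm_num, Real.rpow_natCast]
  obtain ⟨c, hc⟩ : ∃ c : ℕ → ℂ, c = fun j => (inner ℂ (φ j) ψ : ℂ) := ⟨_, rfl⟩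
  obtain ⟨ψJ, hψJ⟩ : ∃ ψJ : Lp ℂ 2 m, ψJ = ∑ j ∈ J, c j • φ j := ⟨_, rfl⟩
  -- finite part
  have hNsum : Nres m A ψJ ≤ ∑ j ∈ J, ‖c j‖ * Nres m A (φ j) := by
    rw [hψJ]
    refine (Nres_sum J _).trans ?_
    refine Finset.sum_le_sum fun j _ => ?_
    rw [Nres_smul]
  have hCS : ∑ j ∈ J, ‖c j‖ * Nres m A (φ j)
      ≤ Real.sqrt (∑ j ∈ J, ‖c j‖ ^ 2) * Real.sqrt (∑ j ∈ J, (Nres m A (φ j)) ^ 2) := by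
    rw [← Real.sqrt_mul (Finset.sum_nonneg fun j _ => sq_nonneg _)]
    rw [Real.le_sqrt (Finset.sum_nonneg fun j _ => mul_nonneg (norm_nonneg _) (Nres_nonneg _))]
    · exact Finset.sum_mul_sq_le_sq_mul_sq J _ _
    · positivity
  have hBessel : Real.sqrt (∑ j ∈ J, ‖c j‖ ^ 2) ≤ ‖ψ‖ := by
    have h : ∑ j ∈ J, ‖c j‖ ^ 2 ≤ ‖ψ‖ ^ 2 := by
      simp only [hc]
      exact φ.orthonormal.sum_inner_products_le (s := J) ψ
    calc Real.sqrt (∑ j ∈ J, ‖c j‖ ^ 2) ≤ Real.sqrt (‖ψ‖ ^ 2) := Real.sqrt_le_sqrt h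
      _ = ‖ψ‖ := Real.sqrt_sq (norm_nonneg _)
  -- tail part
  have htail : ‖ψ - ψJ‖
      = Real.sqrt (∑' j : {j : ℕ // j ∉ J}, ‖(inner ℂ ψ (φ (j : ℕ)) : ℂ)‖ ^ 2) := by
    set r := φ.repr (ψ - ψJ) with hr
    have hrapp : ∀ k, r k = if k ∈ J then 0 else c k := by
      intro k
      rw [hr, HilbertBasis.repr_apply_apply, inner_sub_right, hψJ, inner_sum]
      simp only [inner_smul_right]
      have horth : ∀ j, (inner ℂ (φ k) (φ j) : ℂ) = if k = j then 1 else 0 :=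
        fun j => orthonormal_iff_ite.1 φ.orthonormal k j
      simp only [horth, mul_ite, mul_one, mul_zero]
      rw [Finset.sum_ite_eq]
      rw [hc]
      by_cases hk : k ∈ J <;> simp [hk, hc]
    have hnorm : ‖ψ - ψJ‖ = ‖r‖ := (φ.repr.norm_map (ψ - ψJ)).symm
    have hsq : ‖r‖ ^ 2 = ∑' k, ‖r k‖ ^ 2 := by
      have h := lp.norm_rpow_eq_tsum (p := 2) (by norm_num) r
      simp only [ENNReal.toReal_ofNat, hpow] at h
      exact h
    have hsub : ∑' j : {j : ℕ // j ∉ J}, ‖(inner ℂ ψ (φ (j : ℕ)) : ℂ)‖ ^ 2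
        = ∑' k, ‖r k‖ ^ 2 := by
      have hss : Function.support (fun k => ‖r k‖ ^ 2) ⊆ {k : ℕ | k ∉ J} := by
        intro k hk
        simp only [Function.mem_support] at hk
        intro hkJ
        apply hk
        rw [hrapp k, if_pos hkJ]
        simp
      rw [← tsum_subtype_eq_of_support_subset hss]
      refine tsum_congr fun j => ?_
      rw [hrapp j, if_neg j.2, hc, ← norm_inner_symm]
    rw [hnorm, hsub, ← hsq, Real.sqrt_sq (norm_nonneg _)]
  -- assemble
  have hfin2 : Real.sqrt (∑ j ∈ J, (Nres m A (φ j)) ^ 2)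
      = Real.sqrt (∑ j ∈ J, ∫ x in A, ‖(φ j) x‖ ^ 2 ∂m) := by
    congr 1
    refine Finset.sum_congr rfl fun j _ => ?_
    rw [← Nres_eq_sqrt (φ j), Real.sq_sqrt (integral_nonneg fun x => by positivity)]
  calc Real.sqrt (∫ x in A, ‖ψ x‖ ^ 2 ∂m) = Nres m A ψ := Nres_eq_sqrt ψ
    _ = Nres m A (ψJ + (ψ - ψJ)) := by congr 1; abel
    _ ≤ Nres m A ψJ + Nres m A (ψ - ψJ) := Nres_add _ _
    _ ≤ (∑ j ∈ J, ‖c j‖ * Nres m A (φ j)) + ‖ψ - ψJ‖ :=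
        add_le_add hNsum (Nres_le_norm _)
    _ ≤ Real.sqrt (∑ j ∈ J, ‖c j‖ ^ 2) * Real.sqrt (∑ j ∈ J, (Nres m A (φ j)) ^ 2)
          + ‖ψ - ψJ‖ := add_le_add_left hCS _
    _ ≤ ‖ψ‖ * Real.sqrt (∑ j ∈ J, (Nres m A (φ j)) ^ 2) + ‖ψ - ψJ‖ :=
        add_le_add_left (mul_le_mul_of_nonneg_right hBessel (Real.sqrt_nonneg _)) _
    _ = ‖ψ‖ * Real.sqrt (∑ j ∈ J, ∫ x in A, ‖(φ j) x‖ ^ 2 ∂m)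
          + Real.sqrt (∑' j : {j : ℕ // j ∉ J}, ‖(inner ℂ ψ (φ (j : ℕ)) : ℂ)‖ ^ 2) := by
        rw [hfin2, htail]
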